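/- Let G be an (n-3)-regular connected graph of order n ≥ 5. Then γ_p(G) = 1 if and only if there exists an edge uv ∈ E(G) such that |N[v] \ N[u]| = 1. Otherwise γ_p(G) = 2. -/

import Mathlib

set_option maxHeartbeats 1000000

open SimpleGraph

/-- `G.Obs S v` : vertex `v` eventually becomes monitored (black) when starting
from the set `S` and iteratively applying the zero-forcing propagation rule:
if a monitored vertex has exactly one unmonitored neighbor, that neighbor
becomes monitored. -/
inductive SimpleGraph.Obs {V : Type*} (G : SimpleGraph V) (S : Set V) : V → Prop
  | init {v : V} : v ∈ S → G.Obs S v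
  | force {v w : V} : G.Obs S v → G.Adj v w →
      (∀ u, G.Adj v u → u ≠ w → G.Obs S u) → G.Obs S w

/-- `S` is a zero forcing set of `G`. -/
def SimpleGraph.IsZeroForcingSet {V : Type*} (G : SimpleGraph V) (S : Set V) : Prop :=
  ∀ v, G.Obs S v

/-- The zero forcing number `Z(G)`. -/
noncomputable def SimpleGraph.zeroForcingNumber {V : Type*} (G : SimpleGraph V) : ℕ :=
  sInf {n | ∃ S : Set V, S.ncard = n ∧ G.IsZeroForcingSet S}

/-- The closed neighborhood `N[S]` of a set of vertices. -/
def SimpleGraph.closedNbhdSet {V : Type*} (G : SimpleGraph V) (S : Set V) : Set V :=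
  S ∪ {w | ∃ v ∈ S, G.Adj v w}

/-- `S` is a power dominating set of `G`: `N[S]` is a zero forcing set. -/
def SimpleGraph.IsPowerDominatingSet {V : Type*} (G : SimpleGraph V) (S : Set V) : Prop :=
  G.IsZeroForcingSet (G.closedNbhdSet S)

/-- The power domination number `γₚ(G)`. -/
noncomputable def SimpleGraph.powerDominationNumber {V : Type*} (G : SimpleGraph V) : ℕ :=
  sInf {n | ∃ S : Set V, S.ncard = n ∧ G.IsPowerDominatingSet S}

set_option linter.unusedSectionVars false

section Aux

variable {V : Type*} [Fintype V] {G : SimpleGraph V} [DecidableRel G.Adj]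

lemma obs_closed {S T : Set V} (hST : S ⊆ T)
    (hcl : ∀ v w, v ∈ T → G.Adj v w → (∀ u, G.Adj v u → u ≠ w → u ∈ T) → w ∈ T) :
    ∀ v, G.Obs S v → v ∈ T := by
  intro v h
  induction h with
  | init h => exact hST h
  | force h1 h2 h3 ih1 ih3 => exact hcl _ _ ih1 h2 ih3

/-- Every vertex has exactly two "non-neighbors" distinct from itself. -/
lemma nonnbrs (hn : 5 ≤ Fintype.card V)
    (hreg : G.IsRegularOfDegree (Fintype.card V - 3)) (u : V) :
    ∃ a b : V, a ≠ b ∧ ¬G.Adj u a ∧ ¬G.Adj u b ∧ a ≠ u ∧ b ≠ u ∧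
      (∀ x, ¬ G.Adj u x → x ≠ u → x = a ∨ x = b) := by
  classical
  set F : Finset V := Finset.univ \ insert u (G.neighborFinset u) with hF
  have hu : u ∉ G.neighborFinset u := by simp
  have hcard : F.card = 2 := by
    have h1 : (insert u (G.neighborFinset u)).card = Fintype.card V - 3 + 1 := by
      rw [Finset.card_insert_of_notMem hu, G.card_neighborFinset_eq_degree, hreg u]
    have h2 : F.card = Fintype.card V - ((insert u (G.neighborFinset u)).card) := by
      rw [hF, Finset.card_sdiff_of_subset (Finset.subset_univ _), Finset.card_univ]
    omega
  obtain ⟨a, b, hab, hFab⟩ := Finset.card_eq_two.mp hcard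
  have hmem : ∀ x, x ∈ F ↔ (¬ G.Adj u x ∧ x ≠ u) := by
    intro x
    simp [hF, and_comm]
  refine ⟨a, b, hab, ?_, ?_, ?_, ?_, ?_⟩
  · exact ((hmem a).mp (by simp [hFab])).1
  · exact ((hmem b).mp (by simp [hFab])).1
  · exact ((hmem a).mp (by simp [hFab])).2
  · exact ((hmem b).mp (by simp [hFab])).2
  · intro x hx1 hx2
    have : x ∈ F := (hmem x).mpr ⟨hx1, hx2⟩
    rw [hFab] at this
    simpa using this

/-- Characterization of the `ncard = 1` condition in terms of the two
non-neighbors of `u`. -/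
lemma diff_eq {u v a b : V} (huv : G.Adj u v)
    (ha : ¬G.Adj u a) (hb : ¬G.Adj u b) (hau : a ≠ u) (hbu : b ≠ u) (hab : a ≠ b)
    (hcover : ∀ x, ¬ G.Adj u x → x ≠ u → x = a ∨ x = b) :
    (((insert v (G.neighborSet v)) \ (insert u (G.neighborSet u))).ncard = 1 ↔
      (G.Adj v a ↔ ¬ G.Adj v b)) := by
  classical
  have hva : v ≠ a := fun h => ha (h ▸ huv)
  have hvb : v ≠ b := fun h => hb (h ▸ huv)
  have hset : ((insert v (G.neighborSet v)) \ (insert u (G.neighborSet u)))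
      = {x | (x = a ∨ x = b) ∧ G.Adj v x} := by
    ext x
    simp only [Set.mem_diff, Set.mem_insert_iff, mem_neighborSet, Set.mem_setOf_eq]
    constructor
    · rintro ⟨hx1, hx2⟩
      push_neg at hx2
      have hxu : x ≠ u := hx2.1
      have hxadj : ¬ G.Adj u x := hx2.2
      have hxab := hcover x hxadj hxu
      refine ⟨hxab, ?_⟩
      rcases hx1 with rfl | hx1
      · rcases hxab with rfl | rfl
        · exact absurd rfl hva
        · exact absurd rfl hvb
      · exact hx1
    · rintro ⟨hx1, hx2⟩
      refine ⟨Or.inr hx2, ?_⟩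
      rintro (rfl | hx)
      · rcases hx1 with rfl | rfl
        · exact hau rfl
        · exact hbu rfl
      · rcases hx1 with rfl | rfl
        · exact ha hx
        · exact hb hx
  rw [hset]
  by_cases h1 : G.Adj v a <;> by_cases h2 : G.Adj v b
  · have : {x | (x = a ∨ x = b) ∧ G.Adj v x} = {a, b} := by
      ext x; simp only [Set.mem_setOf_eq, Set.mem_insert_iff, Set.mem_singleton_iff]
      constructor
      · exact fun h => h.1
      · rintro (rfl | rfl) <;> simp [h1, h2]
    rw [this, Set.ncard_pair hab]
    simp [h1, h2]
  · have : {x | (x = a ∨ x = b) ∧ G.Adj v x} = {a} := by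
      ext x; simp only [Set.mem_setOf_eq, Set.mem_singleton_iff]
      constructor
      · rintro ⟨rfl | rfl, hx⟩
        · rfl
        · exact absurd hx h2
      · rintro rfl; exact ⟨Or.inl rfl, h1⟩
    rw [this, Set.ncard_singleton]
    simp [h1, h2]
  · have : {x | (x = a ∨ x = b) ∧ G.Adj v x} = {b} := by
      ext x; simp only [Set.mem_setOf_eq, Set.mem_singleton_iff]
      constructor
      · rintro ⟨rfl | rfl, hx⟩
        · exact absurd hx h1
        · rfl
      · rintro rfl; exact ⟨Or.inr rfl, h2⟩
    rw [this, Set.ncard_singleton]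
    simp [h1, h2]
  · have : {x | (x = a ∨ x = b) ∧ G.Adj v x} = ∅ := by
      ext x; simp only [Set.mem_setOf_eq, Set.mem_empty_iff_false, iff_false]
      rintro ⟨rfl | rfl, hx⟩
      · exact h1 hx
      · exact h2 hx
    rw [this, Set.ncard_empty]
    simp [h1, h2]

lemma mem_closed_singleton {u x : V} :
    x ∈ G.closedNbhdSet {u} ↔ (x = u ∨ G.Adj u x) := by
  simp [SimpleGraph.closedNbhdSet]

/-- If `{u}` power dominates, there is a distinguishing edge. -/
lemma one_implies (hn : 5 ≤ Fintype.card V)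
    (hreg : G.IsRegularOfDegree (Fintype.card V - 3)) (u : V)
    (h : G.IsPowerDominatingSet {u}) :
    ∃ p q : V, G.Adj p q ∧
      ((insert q (G.neighborSet q)) \ (insert p (G.neighborSet p))).ncard = 1 := by
  classical
  obtain ⟨a, b, hab, ha, hb, hau, hbu, hcover⟩ := nonnbrs hn hreg u
  by_contra hc
  push_neg at hc
  set M := G.closedNbhdSet {u} with hM
  have hMa : a ∉ M := by
    rw [mem_closed_singleton]
    rintro (rfl | h'); exacts [hau rfl, ha h']
  have hMb : b ∉ M := by
    rw [mem_closed_singleton]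
    rintro (rfl | h'); exacts [hbu rfl, hb h']
  have hMmem : ∀ x, x ∈ M ↔ (x ≠ a ∧ x ≠ b) := by
    intro x
    rw [mem_closed_singleton]
    constructor
    · rintro (rfl | hx)
      · exact ⟨fun h' => hau h'.symm, fun h' => hbu h'.symm⟩
      · constructor
        · rintro rfl; exact ha hx
        · rintro rfl; exact hb hx
    · rintro ⟨h1, h2⟩
      by_cases hxu : x = u
      · exact Or.inl hxu
      · by_contra h'
        push_neg at h'
        rcases hcover x h'.2 hxu with rfl | rfl
        · exact h1 rfl
        · exact h2 rfl
  -- M is closed under forcing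
  have hclosed : ∀ v w, v ∈ M → G.Adj v w → (∀ t, G.Adj v t → t ≠ w → t ∈ M) → w ∈ M := by
    intro v w hv hvw hforce
    by_contra hw
    have hwab : w = a ∨ w = b := by
      by_contra h'
      push_neg at h'
      exact hw ((hMmem w).mpr h')
    have hvab : v ≠ a ∧ v ≠ b := (hMmem v).mp hv
    have hvu : v ≠ u := by
      rintro rfl
      rcases hwab with rfl | rfl; exacts [ha hvw, hb hvw]
    have huv : G.Adj u v := by
      by_contra h'
      rcases hcover v h' hvu with rfl | rfl
      · exact hvab.1 rfl
      · exact hvab.2 rfl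
    rcases hwab with rfl | rfl
    · -- w = a, so v is adjacent to a; v cannot be adjacent to b
      have hvb : ¬ G.Adj v b := by
        intro h'
        exact hMb (hforce b h' hab.symm)
      exact hc u v huv ((diff_eq huv ha hb hau hbu hab hcover).mpr (by simp [hvw, hvb]))
    · have hva : ¬ G.Adj v a := by
        intro h'
        exact hMa (hforce a h' hab)
      exact hc u v huv ((diff_eq huv ha hb hau hbu hab hcover).mpr (by simp [hva, hvw]))
  exact hMa (obs_closed (fun x hx => hx) hclosed a (h a))

/-- A distinguishing edge gives a power dominating singleton. -/
lemma cond_implies_one (hn : 5 ≤ Fintype.card V)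
    (hreg : G.IsRegularOfDegree (Fintype.card V - 3)) {u v : V} (huv : G.Adj u v)
    (hnc : ((insert v (G.neighborSet v)) \ (insert u (G.neighborSet u))).ncard = 1) :
    G.IsPowerDominatingSet {u} := by
  classical
  obtain ⟨a, b, hab, ha, hb, hau, hbu, hcover⟩ := nonnbrs hn hreg u
  have hxor := (diff_eq huv ha hb hau hbu hab hcover).mp hnc
  set M := G.closedNbhdSet {u} with hM
  have hMmem : ∀ x, x ≠ a → x ≠ b → x ∈ M := by
    intro x h1 h2
    rw [mem_closed_singleton]
    by_cases hxu : x = u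
    · exact Or.inl hxu
    · by_contra h'
      push_neg at h'
      rcases hcover x h'.2 hxu with rfl | rfl
      · exact h1 rfl
      · exact h2 rfl
  -- key step, symmetric in a/b: if v adj a and not b, can force a then b
  have key : ∀ a b : V, a ≠ b → ¬G.Adj u a → ¬G.Adj u b → a ≠ u → b ≠ u →
      (∀ x, x ≠ a → x ≠ b → x ∈ M) → G.Adj v a → ¬ G.Adj v b →
      ∀ z, G.Obs M z := by
    clear hab ha hb hau hbu hcover hxor hMmem hnc
    intro a b hab ha hb hau hbu hMmem hva hvb
    have hvM : v ∈ M := by rw [mem_closed_singleton]; exact Or.inr huv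
    have hObsA : G.Obs M a := by
      refine Obs.force (Obs.init hvM) hva ?_
      intro t ht hta
      refine Obs.init (hMmem t hta ?_)
      rintro rfl; exact hvb ht
    have hObsB : G.Obs M b := by
      -- b has a neighbor
      have hdeg : 0 < G.degree b := by
        rw [hreg b]; omega
      obtain ⟨w, hw⟩ := Finset.card_pos.mp (by rwa [← G.card_neighborFinset_eq_degree] at hdeg)
      rw [mem_neighborFinset] at hw
      have hwb : w ≠ b := fun h => G.loopless.irrefl b (h ▸ hw)
      have hObsW : G.Obs M w := by
        by_cases hwa : w = a
        · exact hwa ▸ hObsA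
        · exact Obs.init (hMmem w hwa hwb)
      refine Obs.force hObsW hw.symm ?_
      intro t ht htb
      by_cases hta : t = a
      · exact hta ▸ hObsA
      · exact Obs.init (hMmem t hta htb)
    intro z
    by_cases hza : z = a
    · exact hza ▸ hObsA
    by_cases hzb : z = b
    · exact hzb ▸ hObsB
    exact Obs.init (hMmem z hza hzb)
  by_cases hva : G.Adj v a
  · exact key a b hab ha hb hau hbu hMmem hva (by tauto)
  · have hvb : G.Adj v b := by tauto
    exact key b a hab.symm hb ha hbu hau (fun x h1 h2 => hMmem x h2 h1) hvb hva

lemma zero_not_mem (hV : Nonempty V) :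
    0 ∉ {n | ∃ S : Set V, S.ncard = n ∧ G.IsPowerDominatingSet S} := by
  rintro ⟨S, hS, hPD⟩
  have hSe : S = ∅ := by
    exact (Set.ncard_eq_zero (Set.toFinite S)).mp hS
  subst hSe
  have hN : G.closedNbhdSet (∅ : Set V) = ∅ := by
    simp [SimpleGraph.closedNbhdSet]
  obtain ⟨v⟩ := hV
  have := obs_closed (T := (∅ : Set V)) (by simp [hN]) (by simp) v (hPD v)
  exact this
  
lemma univ_mem :
    Fintype.card V ∈ {n | ∃ S : Set V, S.ncard = n ∧ G.IsPowerDominatingSet S} := by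
  refine ⟨Set.univ, by simp [Set.ncard_univ], ?_⟩
  intro v
  exact Obs.init (Or.inl (Set.mem_univ v))

end Aux

theorem stmt5 {V : Type*} [Fintype V] (G : SimpleGraph V) [DecidableRel G.Adj]
    (hconn : G.Connected) (hn : 5 ≤ Fintype.card V)
    (hreg : G.IsRegularOfDegree (Fintype.card V - 3)) :
    (G.powerDominationNumber = 1 ↔
      ∃ u v : V, G.Adj u v ∧
        ((insert v (G.neighborSet v)) \ (insert u (G.neighborSet u))).ncard = 1) ∧
    ((¬ ∃ u v : V, G.Adj u v ∧
        ((insert v (G.neighborSet v)) \ (insert u (G.neighborSet u))).ncard = 1) →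
      G.powerDominationNumber = 2) := by
  classical
  have hV : Nonempty V := by
    rw [← Fintype.card_pos_iff]; omega
  set PD := {n | ∃ S : Set V, S.ncard = n ∧ G.IsPowerDominatingSet S} with hPD
  have hne : PD.Nonempty := ⟨Fintype.card V, univ_mem⟩
  have h0 : 0 ∉ PD := zero_not_mem hV
  have fwd : G.powerDominationNumber = 1 →
      ∃ u v : V, G.Adj u v ∧
        ((insert v (G.neighborSet v)) \ (insert u (G.neighborSet u))).ncard = 1 := by
    intro h1
    have hmem : G.powerDominationNumber ∈ PD := Nat.sInf_mem hne
    rw [h1] at hmem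
    obtain ⟨S, hS, hPDS⟩ := hmem
    obtain ⟨u, rfl⟩ := Set.ncard_eq_one.mp hS
    exact one_implies hn hreg u hPDS
  have bwd : (∃ u v : V, G.Adj u v ∧
        ((insert v (G.neighborSet v)) \ (insert u (G.neighborSet u))).ncard = 1) →
      G.powerDominationNumber = 1 := by
    rintro ⟨u, v, huv, hnc⟩
    have h1 : 1 ∈ PD := ⟨{u}, Set.ncard_singleton u, cond_implies_one hn hreg huv hnc⟩
    have hle : G.powerDominationNumber ≤ 1 := Nat.sInf_le h1
    have hne0 : G.powerDominationNumber ≠ 0 := by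
      intro h
      exact h0 (h ▸ Nat.sInf_mem hne)
    omega
  refine ⟨⟨fwd, bwd⟩, ?_⟩
  intro hc
  -- condition fails: show γ_p = 2
  have h1 : 1 ∉ PD := by
    rintro ⟨S, hS, hPDS⟩
    obtain ⟨u, rfl⟩ := Set.ncard_eq_one.mp hS
    exact hc (one_implies hn hreg u hPDS)
  have h2 : 2 ∈ PD := by
    obtain ⟨u⟩ := hV
    obtain ⟨a, b, hab, ha, hb, hau, hbu, hcover⟩ := nonnbrs hn hreg u
    by_cases hx : ∃ x, G.Adj x a ∧ G.Adj x b
    · obtain ⟨x, hxa, hxb⟩ := hx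
      have hxu : x ≠ u := by rintro rfl; exact ha hxa
      refine ⟨{u, x}, ?_, ?_⟩
      · exact Set.ncard_pair (Ne.symm hxu)
      · have huniv : G.closedNbhdSet {u, x} = Set.univ := by
          ext y
          simp only [SimpleGraph.closedNbhdSet, Set.mem_union, Set.mem_setOf_eq,
            Set.mem_insert_iff, Set.mem_singleton_iff, Set.mem_univ, iff_true]
          by_cases hyu : y = u
          · exact Or.inl (Or.inl hyu)
          by_cases hy : G.Adj u y
          · exact Or.inr ⟨u, Or.inl rfl, hy⟩
          rcases hcover y hy hyu with rfl | rfl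
          · exact Or.inr ⟨x, Or.inr rfl, hxa⟩
          · exact Or.inr ⟨x, Or.inr rfl, hxb⟩
        intro v
        exact Obs.init (huniv ▸ Set.mem_univ v)
    · -- no common neighbor of a and b: derive the 5-cycle structure & contradiction
      exfalso
      push_neg at hx
      -- other non-neighbor of a
      obtain ⟨a', ha'1, ha'2, ha'3, ha'cov⟩ :
          ∃ a', ¬G.Adj a a' ∧ a' ≠ a ∧ a' ≠ u ∧
            (∀ x, ¬ G.Adj a x → x ≠ a → x = u ∨ x = a') := by
        obtain ⟨c, d, hcd, hc1, hd1, hc2, hd2, hcov⟩ := nonnbrs hn hreg a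
        have hu : u = c ∨ u = d := hcov u (fun h => ha h.symm) (Ne.symm hau)
        rcases hu with rfl | rfl
        · exact ⟨d, hd1, hd2, hcd.symm, fun x h1 h2 => hcov x h1 h2⟩
        · exact ⟨c, hc1, hc2, hcd, fun x h1 h2 => (hcov x h1 h2).symm⟩
      obtain ⟨b', hb'1, hb'2, hb'3, hb'cov⟩ :
          ∃ b', ¬G.Adj b b' ∧ b' ≠ b ∧ b' ≠ u ∧
            (∀ x, ¬ G.Adj b x → x ≠ b → x = u ∨ x = b') := by
        obtain ⟨c, d, hcd, hc1, hd1, hc2, hd2, hcov⟩ := nonnbrs hn hreg b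
        have hu : u = c ∨ u = d := hcov u (fun h => hb h.symm) (Ne.symm hbu)
        rcases hu with rfl | rfl
        · exact ⟨d, hd1, hd2, hcd.symm, fun x h1 h2 => hcov x h1 h2⟩
        · exact ⟨c, hc1, hc2, hcd, fun x h1 h2 => (hcov x h1 h2).symm⟩
      -- every vertex is in {a, b, u, a', b'}
      have hsub : (Finset.univ : Finset V) ⊆ {a, b, u, a', b'} := by
        intro y _
        simp only [Finset.mem_insert, Finset.mem_singleton]
        by_cases hyea : y = a
        · exact Or.inl hyea
        by_cases hyeb : y = b
        · exact Or.inr (Or.inl hyeb)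
        by_cases hya : G.Adj y a
        · have hyb : ¬ G.Adj y b := fun h => hx y hya h
          rcases hb'cov y (fun h => hyb h.symm) hyeb with rfl | rfl
          · exact Or.inr (Or.inr (Or.inl rfl))
          · exact Or.inr (Or.inr (Or.inr (Or.inr rfl)))
        · rcases ha'cov y (fun h => hya h.symm) hyea with rfl | rfl
          · exact Or.inr (Or.inr (Or.inl rfl))
          · exact Or.inr (Or.inr (Or.inr (Or.inl rfl)))
      have hcard5 : Fintype.card V ≤ ({a, b, u, a', b'} : Finset V).card := by
        rw [← Finset.card_univ]
        exact Finset.card_le_card hsub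
      have hcardle : ({a, b, u, a', b'} : Finset V).card ≤ 5 := by
        apply le_trans (Finset.card_insert_le _ _)
        apply Nat.succ_le_succ
        apply le_trans (Finset.card_insert_le _ _)
        apply Nat.succ_le_succ
        apply le_trans (Finset.card_insert_le _ _)
        apply Nat.succ_le_succ
        exact le_trans (Finset.card_insert_le _ _) (by simp)
      -- a' ∉ {a, b, u} and distinguishes: Adj u a', Adj a' b, ¬ Adj a' a
      have ha'b : a' ≠ b := by
        rintro rfl
        have : (Finset.univ : Finset V) ⊆ {a, a', u, b'} := by
          intro y hy
          have := hsub hy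
          simp only [Finset.mem_insert, Finset.mem_singleton] at this ⊢
          tauto
        have : Fintype.card V ≤ ({a, a', u, b'} : Finset V).card := by
          rw [← Finset.card_univ]; exact Finset.card_le_card this
        have h4 : ({a, a', u, b'} : Finset V).card ≤ 4 := by
          apply le_trans (Finset.card_insert_le _ _)
          apply Nat.succ_le_succ
          apply le_trans (Finset.card_insert_le _ _)
          apply Nat.succ_le_succ
          exact le_trans (Finset.card_insert_le _ _) (by simp)
        omega
      have hua' : G.Adj u a' := by
        by_contra h'
        rcases hcover a' h' ha'3 with rfl | rfl
        · exact ha'2 rfl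
        · exact ha'b rfl
      have ha'bA : G.Adj a' b := by
        by_contra h'
        rcases hb'cov a' (fun h => h' h.symm) ha'b with rfl | rfl
        · exact ha'3 rfl
        · -- a' = b' : then univ ⊆ {a,b,u,a'}, card ≤ 4
          have : (Finset.univ : Finset V) ⊆ {a, b, u, a'} := by
            intro y hy
            have := hsub hy
            simp only [Finset.mem_insert, Finset.mem_singleton] at this ⊢
            tauto
          have : Fintype.card V ≤ ({a, b, u, a'} : Finset V).card := by
            rw [← Finset.card_univ]; exact Finset.card_le_card this
          have h4 : ({a, b, u, a'} : Finset V).card ≤ 4 := by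
            apply le_trans (Finset.card_insert_le _ _)
            apply Nat.succ_le_succ
            apply le_trans (Finset.card_insert_le _ _)
            apply Nat.succ_le_succ
            exact le_trans (Finset.card_insert_le _ _) (by simp)
          omega
      have ha'aA : ¬ G.Adj a' a := fun h => ha'1 h.symm
      exact hc ⟨u, a', hua', (diff_eq hua' ha hb hau hbu hab hcover).mpr
        (by simp [ha'aA, ha'bA])⟩
  have hle : G.powerDominationNumber ≤ 2 := Nat.sInf_le h2
  have hmem : G.powerDominationNumber ∈ PD := Nat.sInf_mem hne
  have hne0 : G.powerDominationNumber ≠ 0 := fun h => h0 (h ▸ hmem)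
  have hne1 : G.powerDominationNumber ≠ 1 := fun h => h1 (h ▸ hmem)
  omega
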